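/- If (g_n) is a strict I-Cauchy sequence in a Riesz ideal I of C(X, ℝ), then (g_n) converges uniformly on all compact subsets of X to some limit ĝ which lies in I, and (g_n) is strictly I-convergent to ĝ. -/

import Mathlib

variable {X : Type*} [TopologicalSpace X]

def IsRieszIdeal (I : Set C(X, ℝ)) : Prop :=
  (0 : C(X, ℝ)) ∈ I ∧ (∀ f g : C(X, ℝ), f ∈ I → g ∈ I → f + g ∈ I) ∧
    (∀ (c : ℝ) (f : C(X, ℝ)), f ∈ I → c • f ∈ I) ∧
    (∀ f g : C(X, ℝ), g ∈ I → (∀ x, |f x| ≤ |g x|) → f ∈ I)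

/-- A decreasing sequence of continuous functions with pointwise infimum `0`. -/
def DecrPtwInfZero (f : ℕ → C(X, ℝ)) : Prop :=
  (∀ k, f (k + 1) ≤ f k) ∧ ∀ x, IsGLB (Set.range fun k => f k x) 0

/-- The sequence `g` is strictly `I`-convergent to `g'`. -/
def StrictConvTo (I : Set C(X, ℝ)) (g : ℕ → C(X, ℝ)) (g' : C(X, ℝ)) : Prop :=
  ∃ f : ℕ → C(X, ℝ), (∀ k, f k ∈ I) ∧ DecrPtwInfZero f ∧
    ∀ k, ∃ N, ∀ n ≥ N, ∀ x, |g' x - g n x| ≤ f k x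

/-- The sequence `g` is a strict `I`-Cauchy sequence. -/
def StrictCauchy (I : Set C(X, ℝ)) (g : ℕ → C(X, ℝ)) : Prop :=
  ∃ f : ℕ → C(X, ℝ), (∀ k, f k ∈ I) ∧ DecrPtwInfZero f ∧
    ∀ k, ∃ N, ∀ n ≥ N, ∀ x, |g n x - g N x| ≤ f k x

def IClosed (I : Set C(X, ℝ)) (S : Set C(X, ℝ)) : Prop :=
  ∀ (g : ℕ → C(X, ℝ)) (g' : C(X, ℝ)), (∀ n, g n ∈ S) → StrictConvTo I g g' → g' ∈ S

def IClosure (I : Set C(X, ℝ)) (S : Set C(X, ℝ)) : Set C(X, ℝ) :=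
  ⋂₀ {C | C ⊆ I ∧ S ⊆ C ∧ IClosed I C}

lemma dini_aux (f : ℕ → C(X, ℝ)) (hanti : ∀ x, Antitone fun k => f k x)
    (htend : ∀ x, Filter.Tendsto (fun k => f k x) Filter.atTop (nhds 0))
    (K : Set X) (hK : IsCompact K) (ε : ℝ) (hε : 0 < ε) :
    ∃ k0, ∀ x ∈ K, f k0 x < ε := by
  have hcov : K ⊆ ⋃ k, {x | f k x < ε} := by
    intro x _
    have := (htend x).eventually (eventually_lt_nhds hε)
    obtain ⟨k, hk⟩ := this.exists
    exact Set.mem_iUnion.2 ⟨k, hk⟩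
  obtain ⟨t, ht⟩ := hK.elim_finite_subcover (fun k => {x | f k x < ε})
    (fun k => isOpen_lt (f k).continuous continuous_const) hcov
  rcases t.eq_empty_or_nonempty with h | h
  · refine ⟨0, fun x hx => ?_⟩
    simp [h] at ht
    exact absurd hx (by simp [ht])
  · obtain ⟨k0, hk0mem, hk0⟩ := t.exists_max_image id h
    refine ⟨k0, fun x hx => ?_⟩
    obtain ⟨k, hk, hfk⟩ := Set.mem_iUnion₂.1 (ht hx)
    exact lt_of_le_of_lt (hanti x (hk0 k hk)) hfk

theorem strictCauchy_converges
    (X : Type*) [TopologicalSpace X] [LocallyCompactSpace X] [T2Space X] [LindelofSpace X]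
    (I : Set C(X, ℝ)) (hI : IsRieszIdeal I)
    (g : ℕ → C(X, ℝ)) (hg : ∀ n, g n ∈ I) (hC : StrictCauchy I g) :
    ∃ g' : C(X, ℝ), g' ∈ I ∧
      (∀ K : Set X, IsCompact K → ∀ ε > (0 : ℝ), ∃ N, ∀ n ≥ N, ∀ x ∈ K,
        |g' x - g n x| ≤ ε) ∧
      StrictConvTo I g g' := by
  obtain ⟨f, hfI, ⟨hfdec, hfglb⟩, hfc⟩ := hC
  choose N hN using hfc
  have hf0 : ∀ k x, 0 ≤ f k x := fun k x => (hfglb x).1 ⟨k, rfl⟩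
  have hfanti : ∀ x, Antitone fun k => f k x := fun x =>
    antitone_nat_of_succ_le fun k => hfdec k x
  have hftend : ∀ x, Filter.Tendsto (fun k => f k x) Filter.atTop (nhds 0) := fun x =>
    tendsto_atTop_isGLB (hfanti x) (hfglb x)
  -- bound for pairs
  have hpair : ∀ k, ∀ m ≥ N k, ∀ n ≥ N k, ∀ x, |g m x - g n x| ≤ 2 * f k x := by
    intro k m hm n hn x
    calc |g m x - g n x| ≤ |g m x - g (N k) x| + |g (N k) x - g n x| := abs_sub_le _ _ _
      _ = |g m x - g (N k) x| + |g n x - g (N k) x| := by rw [abs_sub_comm ((g (N k)) x)]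
      _ ≤ f k x + f k x := add_le_add (hN k m hm x) (hN k n hn x)
      _ = 2 * f k x := by ring
  -- pointwise limit
  have hcauchy : ∀ x, ∃ L, Filter.Tendsto (fun n => g n x) Filter.atTop (nhds L) := by
    intro x
    apply cauchySeq_tendsto_of_complete
    rw [Metric.cauchySeq_iff]
    intro ε hε
    have := (hftend x).eventually (eventually_lt_nhds (half_pos hε))
    obtain ⟨k, hk⟩ := this.exists
    refine ⟨N k, fun m hm n hn => ?_⟩
    calc dist (g m x) (g n x) = |g m x - g n x| := Real.dist_eq _ _
      _ ≤ 2 * f k x := hpair k m hm n hn x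
      _ < ε := by linarith
  choose G hG using hcauchy
  -- key limit bound
  have hkey : ∀ k, ∀ n ≥ N k, ∀ x, |G x - g n x| ≤ 2 * f k x := by
    intro k n hn x
    have htend2 : Filter.Tendsto (fun m => |g m x - g n x|) Filter.atTop
        (nhds (|G x - g n x|)) := ((hG x).sub_const _).abs
    refine le_of_tendsto htend2 ?_
    filter_upwards [Filter.eventually_ge_atTop (N k)] with m hm
    exact hpair k m hm n hn x
  -- continuity of G
  have hGcont : Continuous G := by
    rw [continuous_iff_continuousAt]
    intro x
    obtain ⟨K, hKc, hKn⟩ := exists_compact_mem_nhds x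
    have hunif : TendstoUniformlyOn (fun n x => g n x) G Filter.atTop K := by
      rw [Metric.tendstoUniformlyOn_iff]
      intro ε hε
      obtain ⟨k0, hk0⟩ := dini_aux f hfanti hftend K hKc (ε / 2) (by linarith)
      filter_upwards [Filter.eventually_ge_atTop (N k0)] with n hn y hy
      calc dist (G y) (g n y) = |G y - g n y| := Real.dist_eq _ _
        _ ≤ 2 * f k0 y := hkey k0 n hn y
        _ < ε := by have := hk0 y hy; linarith
    have hcont : ContinuousOn G K :=
      hunif.continuousOn (Filter.Eventually.of_forall fun n => (g n).continuous.continuousOn).frequently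
    exact hcont.continuousAt hKn
  set g' : C(X, ℝ) := ⟨G, hGcont⟩ with hg'
  refine ⟨g', ?_, ?_, ?_⟩
  · -- g' ∈ I
    obtain ⟨h0, hadd, hsmul, hideal⟩ := hI
    refine hideal g' ((2 : ℝ) • f 0 + |g (N 0)|)
      (hadd _ _ (hsmul 2 (f 0) (hfI 0)) (hideal |g (N 0)| (g (N 0)) (hg (N 0)) (by simp))) ?_
    intro x
    have h1 : |G x - g (N 0) x| ≤ 2 * f 0 x := hkey 0 (N 0) le_rfl x
    have h2 : |G x| ≤ 2 * f 0 x + |g (N 0) x| := by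
      calc |G x| ≤ |G x - g (N 0) x| + |g (N 0) x| := by
            have := abs_add_le (G x - g (N 0) x) (g (N 0) x); simpa using this
        _ ≤ 2 * f 0 x + |g (N 0) x| := by linarith
    have h3 : ((2 : ℝ) • f 0 + |g (N 0)|) x = 2 * f 0 x + |g (N 0) x| := by
      simp [ContinuousMap.add_apply, ContinuousMap.smul_apply, ContinuousMap.abs_apply]
    rw [h3]
    have hnn : (0:ℝ) ≤ 2 * f 0 x + |g (N 0) x| := by have := hf0 0 x; positivity
    rw [abs_of_nonneg hnn]
    exact h2
  · -- uniform convergence on compacts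
    intro K hKc ε hε
    obtain ⟨k0, hk0⟩ := dini_aux f hfanti hftend K hKc (ε / 2) (by linarith)
    refine ⟨N k0, fun n hn x hx => ?_⟩
    calc |g' x - g n x| ≤ 2 * f k0 x := hkey k0 n hn x
      _ ≤ ε := by have := hk0 x hx; linarith
  · -- StrictConvTo
    refine ⟨fun k => (2 : ℝ) • f k, fun k => hI.2.2.1 2 (f k) (hfI k), ⟨?_, ?_⟩, ?_⟩
    · intro k
      rw [ContinuousMap.le_def]
      intro x
      have h : f (k + 1) x ≤ f k x := hfdec k x
      simp only [ContinuousMap.smul_apply, smul_eq_mul]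
      linarith
    · intro x
      constructor
      · rintro y ⟨k, rfl⟩
        simp only [ContinuousMap.smul_apply, smul_eq_mul]
        linarith [hf0 k x]
      · intro b hb
        have hb2 : b / 2 ∈ lowerBounds (Set.range fun k => f k x) := by
          rintro y ⟨k, rfl⟩
          have h := hb ⟨k, rfl⟩
          simp only [ContinuousMap.smul_apply, smul_eq_mul] at h
          linarith
        have := (hfglb x).2 hb2
        linarith
    · intro k
      refine ⟨N k, fun n hn x => ?_⟩
      have h := hkey k n hn x
      simp only [ContinuousMap.smul_apply, smul_eq_mul]
      exact h
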